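/- Let (f^* : A ⥤ B, g^* : C ⥤ D, h : A ⥤ C, k : B ⥤ D) together with right adjoints f_* of f^* and g_* of g^* and a natural isomorphism α : k ∘ f^* ≅ g^* ∘ h form a horizontally right adjointable square. Assume moreover that h preserves all small limits and that every object of A is the limit of some small diagram all of whose values lie in the essential image of f_*. If f^* X is k-colocal for an object X of A, then X is h-colocal. -/

import Mathlib

/-!
Given a horizontally right adjointable square (adjunctions `f^* ⊣ f_*`, `g^* ⊣ g_*`, vertical
functors `h`, `k`, a natural isomorphism `α : k ∘ f^* ≅ g^* ∘ h` whose mate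
`h ∘ f_* ⟶ g_* ∘ k` is an isomorphism), assume moreover that `h` preserves all small limits
and that every object of `A` is the limit of some small diagram all of whose values lie in the
essential image of `f_*`.  If `f^* X` is `k`-colocal, then `X` is `h`-colocal.
-/

open CategoryTheory CategoryTheory.Limits

universe w v₂ v₃ v₄ u₁ u₂ u₃ u₄

/-- `X` is `F`-colocal if `F` induces a bijection `Hom(X, Y) → Hom(F X, F Y)` for all `Y`. -/
def Colocal {C : Type u₁} {D : Type u₂} [Category.{v₁} C] [Category.{v₂} D]
    (F : C ⥤ D) (X : C) : Prop :=
  ∀ Y : C, Function.Bijective (fun f : X ⟶ Y => F.map f)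

theorem stmt7 {A : Type u₁} {B : Type u₂} {C : Type u₃} {D : Type u₄}
    [Category.{w} A] [Category.{v₂} B] [Category.{v₃} C] [Category.{v₄} D]
    (fstar : A ⥤ B) (fpush : B ⥤ A) (adjf : fstar ⊣ fpush)
    (gstar : C ⥤ D) (gpush : D ⥤ C) (adjg : gstar ⊣ gpush)
    (h : A ⥤ C) (k : B ⥤ D) (α : fstar ⋙ k ≅ h ⋙ gstar)
    (hmate : IsIso (mateEquiv adjf adjg α.inv))
    [PreservesLimitsOfSize.{w, w} h]
    (hcover : ∀ a : A, ∃ (J : Cat.{w, w}) (W : J ⥤ A) (c : Cone W),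
      (∀ j : J, fpush.essImage (W.obj j)) ∧ Nonempty (IsLimit c) ∧ Nonempty (c.pt ≅ a))
    (X : A) (hX : Colocal k (fstar.obj X)) :
    Colocal h X := by
  set μ := mateEquiv adjf adjg α.inv with hμ
  -- Step 1: bijectivity at objects of the form `fpush.obj b`
  have key₀ : ∀ b : B, Function.Bijective (fun f : X ⟶ fpush.obj b => h.map f) := by
    intro b
    have hiα : IsIso (α.inv.app X) := inferInstance
    have hiμ : IsIso (μ.app b) := by
      haveI : IsIso μ.natTrans := hmate
      exact NatIso.isIso_app_of_isIso μ.natTrans b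
    have hcomm : ∀ f : X ⟶ fpush.obj b,
        h.map f ≫ μ.app b = adjg.homEquiv (h.obj X) (k.obj b)
          (α.inv.app X ≫ k.map ((adjf.homEquiv X b).symm f)) := by
      intro f
      simp only [hμ, mateEquiv, Equiv.coe_fn_mk, Adjunction.homEquiv_unit,
        Adjunction.homEquiv_counit, Functor.whiskerLeft_app, Functor.whiskerRight_app, Functor.comp_obj,
        Functor.id_obj, NatTrans.comp_app, Functor.map_comp, Category.assoc,
        Functor.rightUnitor_inv_app, Functor.leftUnitor_hom_app, Functor.associator_hom_app,
        Functor.associator_inv_app, Category.id_comp, Category.comp_id, Functor.map_id]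
      rw [← Adjunction.unit_naturality_assoc adjg (h.map f)]
      simp only [Functor.comp_map, Functor.id_map, Category.assoc]
      congr 1
      rw [← gpush.map_comp, ← gpush.map_comp, ← gpush.map_comp, ← Category.assoc,
        ← Functor.comp_map h gstar, α.inv.naturality f]
      simp [Functor.comp_map]
    have heq : (fun f : X ⟶ fpush.obj b => h.map f) =
        (fun t : h.obj X ⟶ gpush.obj (k.obj b) => t ≫ inv (μ.app b)) ∘
        (adjg.homEquiv (h.obj X) (k.obj b)) ∘
        (fun t : k.obj (fstar.obj X) ⟶ k.obj b => α.inv.app X ≫ t) ∘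
        (fun g : fstar.obj X ⟶ b => k.map g) ∘
        ((adjf.homEquiv X b).symm) := by
      funext f
      show h.map f = adjg.homEquiv (h.obj X) (k.obj b)
        (α.inv.app X ≫ k.map ((adjf.homEquiv X b).symm f)) ≫ inv (μ.app b)
      rw [← hcomm f, Category.assoc, IsIso.hom_inv_id, Category.comp_id]
    rw [heq]
    have b3 : Function.Bijective
        (fun t : k.obj (fstar.obj X) ⟶ k.obj b => α.inv.app X ≫ t) := by
      constructor
      · intro s t hst
        simpa using congrArg (fun z => inv (α.inv.app X) ≫ z) hst
      · intro s
        exact ⟨inv (α.inv.app X) ≫ s, by simp⟩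
    have b5 : Function.Bijective
        (fun t : h.obj X ⟶ gpush.obj (k.obj b) => t ≫ inv (μ.app b)) := by
      constructor
      · intro s t hst
        simpa using congrArg (fun z => z ≫ μ.app b) hst
      · intro s
        exact ⟨s ≫ μ.app b, by simp⟩
    exact b5.comp ((adjg.homEquiv (h.obj X) (k.obj b)).bijective.comp
      (b3.comp ((hX b).comp (adjf.homEquiv X b).symm.bijective)))
  -- Step 2: bijectivity on the essential image
  have key : ∀ Y : A, fpush.essImage Y →
      Function.Bijective (fun f : X ⟶ Y => h.map f) := by
    rintro Y ⟨b, ⟨i⟩⟩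
    have heq : (fun f : X ⟶ Y => h.map f) =
        (fun g : h.obj X ⟶ h.obj (fpush.obj b) => g ≫ h.map i.hom) ∘
        ((fun f : X ⟶ fpush.obj b => h.map f) ∘ (fun f : X ⟶ Y => f ≫ i.inv)) := by
      funext f
      simp
    rw [heq]
    have b1 : Function.Bijective (fun f : X ⟶ Y => f ≫ i.inv) := by
      constructor
      · intro s t hst
        simpa using congrArg (fun z => z ≫ i.hom) hst
      · intro s
        exact ⟨s ≫ i.hom, by simp⟩
    have b2 : Function.Bijective
        (fun g : h.obj X ⟶ h.obj (fpush.obj b) => g ≫ h.map i.hom) := by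
      constructor
      · intro s t hst
        simpa using congrArg (fun z => z ≫ h.map i.inv) hst
      · intro s
        exact ⟨s ≫ h.map i.inv, by simp [← h.map_comp]⟩
    exact b2.comp ((key₀ b).comp b1)
  -- Step 3: general objects via limits
  intro Y
  obtain ⟨J, W, c, hW, ⟨hc⟩, ⟨e⟩⟩ := hcover Y
  -- replace the cone by one with point `Y`
  let c2 : Cone W :=
    { pt := Y
      π := { app := fun j => e.inv ≫ c.π.app j
             naturality := fun j j' m => by
               simp [c.w m] } }
  have hc2 : IsLimit c2 := hc.ofIsoLimit (Cones.ext e (fun j => by simp [c2]))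
  have hhc2 : IsLimit (h.mapCone c2) := isLimitOfPreserves h hc2
  constructor
  · intro f g hfg
    apply hc2.hom_ext
    intro j
    exact (key (W.obj j) (hW j)).1 (by
      simpa only [Functor.map_comp] using congrArg (· ≫ h.map (c2.π.app j)) hfg)
  · intro φ
    let s : Cone W :=
      { pt := X
        π := { app := fun j => Function.surjInv (key (W.obj j) (hW j)).2
                 (φ ≫ h.map (c2.π.app j))
               naturality := fun j j' m => by
                 apply (key (W.obj j') (hW j')).1
                 simp only [Functor.map_comp, Functor.const_obj_obj, Functor.const_obj_map,
                   Category.id_comp]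
                 rw [Function.surjInv_eq (key (W.obj j') (hW j')).2,
                   Function.surjInv_eq (key (W.obj j) (hW j)).2]
                 simp only [Functor.map_comp, Category.assoc]
                 rw [← h.map_comp (c2.π.app j) (W.map m), c2.w m] }}
    refine ⟨hc2.lift s, ?_⟩
    apply hhc2.hom_ext
    intro j
    simp only [Functor.mapCone_pt, Functor.mapCone_π_app, ← h.map_comp, hc2.fac s j]
    exact (Function.surjInv_eq (key (W.obj j) (hW j)).2 _)
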